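/- For any k ≥ 1 there exist δ₁ > 0 and L₁ > 0, depending only on k, such that the following holds. Let E, E' ⊂ B be k-dimensional subspaces with d_H(E, E') ≤ δ₁, let F be a closed complement to E with |π_{E⊕F}| ≤ √k, and let {v_1, …, v_k} be a basis of E consisting of unit vectors; assume δ₁ is small enough that B = E' ⊕ F, and set v'_i = (π_{E'⊕F} v_i)/|π_{E'⊕F} v_i|. Then: (1) N[v'_1, …, v'_k] ≤ 2k · N[v_1, …, v_k]; and (2) | log ( m_E P[v_1, …, v_k] / m_{E'} P[v'_1, …, v'_k] ) | ≤ L₁ · d_H(E, E'). -/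

import Mathlib

open MeasureTheory Filter Metric Module Submodule Set

noncomputable section

namespace BY

variable {B B' : Type*}

/-- The unit sphere of a subspace `E`. -/
def subSphere [NormedAddCommGroup B] [NormedSpace ℝ B] (E : Submodule ℝ B) : Set B :=
  {v : B | v ∈ E ∧ ‖v‖ = 1}

/-- `d_H(E, E')`: the Hausdorff distance between the unit spheres of `E` and `E'`. -/
def dH [NormedAddCommGroup B] [NormedSpace ℝ B] (E E' : Submodule ℝ B) : ℝ :=
  Metric.hausdorffDist (subSphere E) (subSphere E')

/-- The supremum of `‖π x‖` over `x ∈ S`, where `π` is the projection onto `E` along `F`. -/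
def projNormOn [NormedAddCommGroup B] [NormedSpace ℝ B] (E F : Submodule ℝ B)
    (h : IsCompl E F) (S : Set B) : ℝ :=
  sSup ((fun x => ‖(E.linearProjOfIsCompl F h x : B)‖) '' S)

/-- `|π_{E⊕F}|`: the operator norm of the projection onto `E` along `F`. -/
def projNorm [NormedAddCommGroup B] [NormedSpace ℝ B] (E F : Submodule ℝ B)
    (h : IsCompl E F) : ℝ :=
  projNormOn E F h (Metric.closedBall 0 1)

/-- `α(E, F) = inf { ‖e - f‖ : e ∈ E, ‖e‖ = 1, f ∈ F }`. -/
def alphaAngle [NormedAddCommGroup B] [NormedSpace ℝ B] (E F : Submodule ℝ B) : ℝ :=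
  sInf {r : ℝ | ∃ e ∈ E, ∃ f ∈ F, ‖e‖ = 1 ∧ r = ‖e - f‖}

/-- `ω_k`: the volume of the Euclidean unit ball in `ℝ^k`. -/
def euclideanBallVol (k : ℕ) : ENNReal :=
  volume (Metric.closedBall (0 : EuclideanSpace ℝ (Fin k)) 1)

/-- `μ` is the induced volume `m_E` on the `k`-dimensional subspace `E`: the (unique) Haar
measure on `E` assigning mass `ω_k` to the unit ball of `E`. -/
def IsInducedVolume [NormedAddCommGroup B] [NormedSpace ℝ B] [MeasurableSpace B]
    (E : Submodule ℝ B) (k : ℕ) (μ : Measure E) : Prop :=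
  Measure.IsAddHaarMeasure μ ∧ μ {v : E | ‖v‖ ≤ 1} = euclideanBallVol k

/-- `det(A|E)`, computed with respect to induced volumes `μE` on `E` and `μF` on a
subspace `F` containing `A(E)`: the ratio `μF(A(B_E)) / μE(B_E)` where `B_E` is
the unit ball of `E`. -/
def detIn [NormedAddCommGroup B] [NormedSpace ℝ B] [NormedAddCommGroup B'] [NormedSpace ℝ B']
    [MeasurableSpace B] [MeasurableSpace B']
    (A : B →L[ℝ] B') (E : Submodule ℝ B) (F : Submodule ℝ B')
    (μE : Measure E) (μF : Measure F) : ℝ :=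
  (μF {w : F | ∃ v : B, v ∈ E ∧ ‖v‖ ≤ 1 ∧ A v = (w : B')}).toReal /
    (μE {v : E | ‖v‖ ≤ 1}).toReal

/-- `P[v₁, …, v_k]`: the parallelepiped spanned by the vectors `v i`. -/
def pped [AddCommGroup B] [Module ℝ B] {k : ℕ} (v : Fin k → B) : Set B :=
  {x : B | ∃ a : Fin k → ℝ, (∀ i, a i ∈ Set.Icc (0 : ℝ) 1) ∧ x = ∑ i, a i • v i}

/-- `N[v₁, …, v_k]`: the sum of the norms of the projections, within the span of the `v i`,
onto each `⟨v i⟩` along the span of the other basis vectors. -/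
def Nquan [NormedAddCommGroup B] [NormedSpace ℝ B] {k : ℕ} (v : Fin k → B) : ℝ :=
  ∑ i, sSup {r : ℝ | ∃ a : Fin k → ℝ, ‖∑ j, a j • v j‖ ≤ 1 ∧ r = ‖a i • v i‖}

/-- The operator norm of the restriction of `A` to the subspace `E`. -/
def opNormOnSub [NormedAddCommGroup B] [NormedSpace ℝ B] [NormedAddCommGroup B']
    [NormedSpace ℝ B'] (A : B →L[ℝ] B') (E : Submodule ℝ B) : ℝ :=
  sSup {r : ℝ | ∃ v ∈ E, ‖v‖ ≤ 1 ∧ r = ‖A v‖}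

/-- The `n`-th iterate (`n ∈ ℤ`) of the invertible pair `(f, g)`, `g = f⁻¹`. -/
def zIter {X : Type*} (f g : X → X) (n : ℤ) (x : X) : X :=
  if 0 ≤ n then f^[n.toNat] x else g^[(-n).toNat] x

/-- `ψ'(x) = sup_{n ∈ ℤ} e^{-|n| δ} ψ(f^n x)`. -/
def psiSup {X : Type*} (f g : X → X) (ψ : X → ℝ) (δ : ℝ) (x : X) : ℝ :=
  sSup (Set.range fun n : ℤ => Real.exp (-|(n : ℝ)| * δ) * ψ (zIter f g n x))

/-- The cocycle `T^n_x = T_{f^{n-1} x} ∘ ⋯ ∘ T_x`. -/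
def cocycle {X : Type*} [NormedAddCommGroup B] [NormedSpace ℝ B]
    (f : X → X) (T : X → B →L[ℝ] B) : ℕ → X → B →L[ℝ] B
  | 0, _ => ContinuousLinearMap.id ℝ B
  | n + 1, x => (cocycle f T n (f x)).comp (T x)

end BY

end
set_option maxHeartbeats 1000000 in
set_option synthInstance.maxHeartbeats 200000 in
theorem _dummy : True := trivial

noncomputable section

namespace S9

open MeasureTheory Filter Metric Module Submodule Set

variable {B : Type*} [NormedAddCommGroup B] [NormedSpace ℝ B] [CompleteSpace B]

set_option synthInstance.maxHeartbeats 400000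

set_option maxHeartbeats 1000000

/-- homogeneous extension of a unit-vector bound for a linear map -/
lemma homog {E₀ : Submodule ℝ B} {T : B →ₗ[ℝ] B} {C : ℝ} (hC : 0 ≤ C)
    (hunit : ∀ x ∈ E₀, ‖x‖ = 1 → ‖T x‖ ≤ C) :
    ∀ x ∈ E₀, ‖T x‖ ≤ C * ‖x‖ := by
  intro x hx
  rcases eq_or_ne x 0 with rfl | hx0
  · simp
  · have hnx : ‖x‖ ≠ 0 := norm_ne_zero_iff.mpr hx0
    set u : B := ‖x‖⁻¹ • x with hu
    have hmem : u ∈ E₀ := E₀.smul_mem _ hx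
    have hun : ‖u‖ = 1 := norm_smul_inv_norm hx0
    have hxu : x = ‖x‖ • u := by rw [hu, smul_inv_smul₀ hnx]
    calc ‖T x‖ = ‖T (‖x‖ • u)‖ := by rw [← hxu]
    _ = ‖x‖ * ‖T u‖ := by
        rw [T.map_smul, norm_smul, Real.norm_eq_abs, abs_of_nonneg (norm_nonneg x)]
    _ ≤ ‖x‖ * C := mul_le_mul_of_nonneg_left (hunit u hmem hun) (norm_nonneg x)
    _ = C * ‖x‖ := mul_comm _ _

lemma proj_bound {E F : Submodule ℝ B} [FiniteDimensional ℝ E] (hF : IsClosed (F : Set B))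
    (h : IsCompl E F) {M : ℝ} (hle : BY.projNorm E F h ≤ M) :
    ∀ x : B, ‖(E.linearProjOfIsCompl F h x : B)‖ ≤ M * ‖x‖ := by
  have hE : IsClosed (E : Set B) := E.closed_of_finiteDimensional
  set πc := E.linearProjOfClosedCompl F h hE hF with hπc
  have hcoe : ∀ x : B, (E.linearProjOfIsCompl F h x : E) = πc x := by
    intro x; rw [hπc]; rfl
  have hbdd : BddAbove
      ((fun x => ‖(E.linearProjOfIsCompl F h x : B)‖) '' Metric.closedBall 0 1) := by
    refine ⟨‖πc‖, ?_⟩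
    rintro r ⟨x, hx, rfl⟩
    rw [Metric.mem_closedBall, dist_zero_right] at hx
    calc ‖(E.linearProjOfIsCompl F h x : B)‖ = ‖πc x‖ := by rw [hcoe]; exact Submodule.norm_coe _
    _ ≤ ‖πc‖ * ‖x‖ := πc.le_opNorm x
    _ ≤ ‖πc‖ * 1 := by have h0 : (0:ℝ) ≤ ‖πc‖ := ContinuousLinearMap.opNorm_nonneg πc; nlinarith
    _ = ‖πc‖ := mul_one _
  have hunit : ∀ x : B, ‖x‖ ≤ 1 → ‖(E.linearProjOfIsCompl F h x : B)‖ ≤ M := by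
    intro x hx
    refine le_trans (le_csSup hbdd ?_) hle
    exact ⟨x, by rwa [Metric.mem_closedBall, dist_zero_right], rfl⟩
  intro x
  rcases eq_or_ne x 0 with rfl | hx0
  · simp
  · have hnx : ‖x‖ ≠ 0 := norm_ne_zero_iff.mpr hx0
    have h1 : ‖(E.linearProjOfIsCompl F h (‖x‖⁻¹ • x) : B)‖ ≤ M :=
      hunit _ (le_of_eq (norm_smul_inv_norm hx0))
    rw [LinearMap.map_smul] at h1
    have h2 : ‖(((‖x‖⁻¹ • E.linearProjOfIsCompl F h x) : E) : B)‖
        = ‖x‖⁻¹ * ‖(E.linearProjOfIsCompl F h x : B)‖ := by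
      rw [Submodule.coe_smul, norm_smul, Real.norm_eq_abs, abs_of_nonneg (by positivity)]
    rw [h2] at h1
    calc ‖(E.linearProjOfIsCompl F h x : B)‖
        = ‖x‖ * (‖x‖⁻¹ * ‖(E.linearProjOfIsCompl F h x : B)‖) := by field_simp
    _ ≤ ‖x‖ * M := mul_le_mul_of_nonneg_left h1 (norm_nonneg x)
    _ = M * ‖x‖ := mul_comm _ _

lemma subSphere_eq (E : Submodule ℝ B) :
    BY.subSphere E = Subtype.val '' (Metric.sphere (0 : E) 1) := by
  ext x
  simp only [BY.subSphere, Set.mem_setOf_eq, Set.mem_image, Metric.mem_sphere, dist_zero_right]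
  constructor
  · rintro ⟨hx, hn⟩
    refine ⟨⟨x, hx⟩, ?_, rfl⟩
    rw [← Submodule.norm_coe (⟨x, hx⟩ : E)]
    exact hn
  · rintro ⟨u, hu, rfl⟩
    refine ⟨u.2, ?_⟩
    rw [Submodule.norm_coe]
    exact hu

lemma subSphere_compact (E : Submodule ℝ B) [FiniteDimensional ℝ E] :
    IsCompact (BY.subSphere E) := by
  rw [subSphere_eq]
  exact (isCompact_sphere (0 : E) 1).image continuous_subtype_val

lemma subSphere_nonempty {E : Submodule ℝ B} {k : ℕ} (hk : 1 ≤ k) [FiniteDimensional ℝ E]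
    (hfr : Module.finrank ℝ E = k) : (BY.subSphere E).Nonempty := by
  have hne : E ≠ ⊥ := by
    intro hbot
    rw [hbot] at hfr
    simp [finrank_bot] at hfr
    omega
  obtain ⟨x, hxE, hx0⟩ := Submodule.exists_mem_ne_zero_of_ne_bot hne
  exact ⟨‖x‖⁻¹ • x, E.smul_mem _ hxE, norm_smul_inv_norm hx0⟩

lemma near_point {E E' : Submodule ℝ B} {k : ℕ} (hk : 1 ≤ k)
    [FiniteDimensional ℝ E] [FiniteDimensional ℝ E']
    (hfr : Module.finrank ℝ E = k) (hfr' : Module.finrank ℝ E' = k)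
    {x : B} (hx : x ∈ BY.subSphere E) :
    ∃ y ∈ BY.subSphere E', ‖x - y‖ ≤ BY.dH E E' := by
  have hne := subSphere_nonempty (E := E) hk hfr
  have hne' := subSphere_nonempty (E := E') hk hfr'
  have hfin : EMetric.hausdorffEdist (BY.subSphere E) (BY.subSphere E') ≠ ⊤ :=
    Metric.hausdorffEdist_ne_top_of_nonempty_of_bounded hne hne'
      (subSphere_compact E).isBounded (subSphere_compact E').isBounded
  obtain ⟨y, hy, hyd⟩ := (subSphere_compact E').exists_infDist_eq_dist hne' x
  refine ⟨y, hy, ?_⟩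
  rw [← dist_eq_norm, ← hyd]
  exact Metric.infDist_le_hausdorffDist_of_mem hx hfin

/-- volume of image under a diagonal map -/
lemma diag_image_volume {k : ℕ} (c : Fin k → ℝ) (S : Set (Fin k → ℝ)) :
    volume ((fun (a : Fin k → ℝ) (i : Fin k) => c i * a i) '' S)
      = ENNReal.ofReal |∏ i, c i| * volume S := by
  set D : (Fin k → ℝ) →ₗ[ℝ] (Fin k → ℝ) := LinearMap.pi (fun i => c i • LinearMap.proj i) with hD
  have hDapp : ⇑D = fun (a : Fin k → ℝ) (i : Fin k) => c i * a i := by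
    ext a i
    simp [hD, LinearMap.pi_apply, smul_eq_mul]
  have hdet : LinearMap.det D = ∏ i, c i := by
    rw [← LinearMap.det_toMatrix (Pi.basisFun ℝ (Fin k))]
    have hM : LinearMap.toMatrix (Pi.basisFun ℝ (Fin k)) (Pi.basisFun ℝ (Fin k)) D
        = Matrix.diagonal c := by
      ext i j
      simp only [LinearMap.toMatrix_apply, Pi.basisFun_repr, Pi.basisFun_apply]
      rw [hDapp]
      by_cases hij : i = j
      · subst hij; simp [Matrix.diagonal]
      · simp [Matrix.diagonal, Pi.single_apply, hij, Ne.symm hij]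
    rw [hM, Matrix.det_diagonal]
  rw [← hDapp, Measure.addHaar_image_linearMap, hdet]

lemma vol_key {k : ℕ} (hk : 1 ≤ k) (E : Submodule ℝ B) [FiniteDimensional ℝ E]
    [MeasurableSpace B] [BorelSpace B]
    (μ : Measure E) (hμ1 : Measure.IsAddHaarMeasure μ)
    (hμ2 : μ {v : E | ‖v‖ ≤ 1} = BY.euclideanBallVol k)
    (w : Fin k → E) (hw : LinearIndependent ℝ w) (hcard : Module.finrank ℝ E = k) :
    μ {u : E | ∃ a : Fin k → ℝ, (∀ i, a i ∈ Set.Icc (0:ℝ) 1) ∧ u = ∑ i, a i • w i}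
      * volume {a : Fin k → ℝ | ‖(∑ i, a i • w i : E)‖ ≤ 1} = BY.euclideanBallVol k := by
  haveI : Nonempty (Fin k) := Fin.pos_iff_nonempty.mp hk
  haveI := hμ1
  set b : Basis (Fin k) ℝ E :=
    basisOfLinearIndependentOfCardEqFinrank hw (by simp [hcard]) with hb
  have hbw : ⇑b = w := coe_basisOfLinearIndependentOfCardEqFinrank hw _
  set Lc : (Fin k → ℝ) ≃L[ℝ] E := b.equivFun.symm.toContinuousLinearEquiv with hLc
  have hLca : ∀ a : Fin k → ℝ, Lc a = ∑ i, a i • w i := by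
    intro a
    show b.equivFun.symm a = _
    rw [Basis.equivFun_symm_apply, hbw]
  set ν : Measure (Fin k → ℝ) := μ.map Lc.symm with hν
  haveI : ν.IsAddHaarMeasure := Lc.symm.isAddHaarMeasure_map μ
  have hmap : ∀ A : Set (Fin k → ℝ), MeasurableSet A → ν A = μ (⇑Lc '' A) := by
    intro A hA
    rw [hν, Measure.map_apply (Lc.symm.continuous.measurable) hA]
    congr 1
    ext u
    simp only [Set.mem_preimage, Set.mem_image]
    constructor
    · intro h; exact ⟨Lc.symm u, h, by simp⟩
    · rintro ⟨a, ha, rfl⟩; simpa using ha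
  have huniq : ν = (Measure.addHaarScalarFactor ν volume) • (volume : Measure (Fin k → ℝ)) :=
    Measure.isAddLeftInvariant_eq_smul ν volume
  set c : NNReal := Measure.addHaarScalarFactor ν volume with hc
  set cube : Set (Fin k → ℝ) := Set.pi Set.univ (fun _ => Set.Icc (0:ℝ) 1) with hcube
  have hcubem : MeasurableSet cube := MeasurableSet.univ_pi fun i => measurableSet_Icc
  have hcubev : volume cube = 1 := by
    rw [hcube, volume_pi_pi]
    simp [Real.volume_Icc]
  set K : Set (Fin k → ℝ) := {a | ‖(∑ i, a i • w i : E)‖ ≤ 1} with hK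
  have hKc : IsClosed K := by
    have : K = (fun a => ‖Lc a‖) ⁻¹' (Set.Iic 1) := by
      ext a; simp [hK, hLca]
    rw [this]
    exact IsClosed.preimage (Lc.continuous.norm) isClosed_Iic
  have hKm : MeasurableSet K := hKc.measurableSet
  have himgP : ⇑Lc '' cube
      = {u : E | ∃ a : Fin k → ℝ, (∀ i, a i ∈ Set.Icc (0:ℝ) 1) ∧ u = ∑ i, a i • w i} := by
    ext u
    simp only [Set.mem_image, Set.mem_setOf_eq, hcube, Set.mem_pi, Set.mem_univ, forall_true_left]
    constructor
    · rintro ⟨a, ha, rfl⟩; exact ⟨a, ha, hLca a⟩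
    · rintro ⟨a, ha, rfl⟩; exact ⟨a, ha, hLca a⟩
  have himgK : ⇑Lc '' K = {v : E | ‖v‖ ≤ 1} := by
    ext u
    simp only [Set.mem_image, Set.mem_setOf_eq, hK]
    constructor
    · rintro ⟨a, ha, rfl⟩; rwa [hLca a]
    · intro h; exact ⟨Lc.symm u, by rw [← hLca]; simpa using h, by simp⟩
  have h1 : μ {u : E | ∃ a : Fin k → ℝ, (∀ i, a i ∈ Set.Icc (0:ℝ) 1) ∧ u = ∑ i, a i • w i}
      = (c : ENNReal) := by
    rw [← himgP, ← hmap cube hcubem, huniq]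
    rw [Measure.smul_apply, hcubev, ENNReal.smul_def, smul_eq_mul, mul_one]
  have h2 : (c : ENNReal) * volume K = BY.euclideanBallVol k := by
    have hx : ν K = μ {v : E | ‖v‖ ≤ 1} := by rw [hmap K hKm, himgK]
    rw [← hμ2, ← hx, huniq]
    rw [Measure.smul_apply, ENNReal.smul_def, smul_eq_mul]
  rw [h1]
  exact h2

lemma arith_q {ε : ℝ} (hε0 : 0 ≤ ε) (hε3 : ε ≤ 1/3) :
    (1+ε) * (1-ε)⁻¹ ≤ Real.exp (3*ε) := by
  have h1mε : (0:ℝ) < 1 - ε := by linarith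
  have h2 : (1+ε) / (1-ε) ≤ 1 + 3*ε := by
    rw [div_le_iff₀ h1mε]
    nlinarith
  have h3 : 1 + 3*ε ≤ Real.exp (3*ε) := by
    have := Real.add_one_le_exp (3*ε)
    linarith
  calc (1+ε) * (1-ε)⁻¹ = (1+ε)/(1-ε) := by rw [div_eq_mul_inv]
  _ ≤ 1 + 3*ε := h2
  _ ≤ Real.exp (3*ε) := h3

end S9

end
set_option maxHeartbeats 3000000 in
set_option synthInstance.maxHeartbeats 400000 in
theorem statement9 {B : Type*} [NormedAddCommGroup B] [NormedSpace ℝ B] [CompleteSpace B]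
    [MeasurableSpace B] [BorelSpace B] (k : ℕ) (hk : 1 ≤ k) :
    ∃ δ₁ > (0 : ℝ), ∃ L₁ > (0 : ℝ),
      ∀ (E E' F : Submodule ℝ B)
        [FiniteDimensional ℝ E] [FiniteDimensional ℝ E'],
        Module.finrank ℝ E = k → Module.finrank ℝ E' = k →
        IsClosed (F : Set B) →
        BY.dH E E' ≤ δ₁ →
        ∀ h : IsCompl E F, BY.projNorm E F h ≤ Real.sqrt k →
        ∀ h' : IsCompl E' F,
        ∀ v : Fin k → B,
          (∀ i, v i ∈ E) → (∀ i, ‖v i‖ = 1) → LinearIndependent ℝ v →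
          Submodule.span ℝ (Set.range v) = E →
        ∀ v' : Fin k → B,
          (∀ i, v' i =
            ‖(E'.linearProjOfIsCompl F h' (v i) : B)‖⁻¹ •
              ((E'.linearProjOfIsCompl F h' (v i) : B))) →
        ∀ (μE : MeasureTheory.Measure E) (μE' : MeasureTheory.Measure E'),
          BY.IsInducedVolume E k μE → BY.IsInducedVolume E' k μE' →
          BY.Nquan v' ≤ 2 * k * BY.Nquan v ∧
          |Real.log ((μE (Subtype.val ⁻¹' BY.pped v)).toReal /
              (μE' (Subtype.val ⁻¹' BY.pped v')).toReal)| ≤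
            L₁ * BY.dH E E' := by
  classical
  open MeasureTheory Metric Module Submodule Set Pointwise in
  set sk := Real.sqrt k with hskdef
  have hsk1 : 1 ≤ sk := by
    rw [show (1:ℝ) = Real.sqrt 1 by simp]
    exact Real.sqrt_le_sqrt (by exact_mod_cast hk)
  have hsk0 : 0 ≤ sk := by linarith
  have hkR : (1:ℝ) ≤ (k:ℝ) := by exact_mod_cast hk
  refine ⟨(3 * (1 + 2 * sk))⁻¹, by positivity, 3 * k * (1 + 2 * sk), by positivity, ?_⟩
  intro E E' F _ _ hfrE hfrE' hFcl hdle h h_proj h' v hvE hvU hvind _hvspan v' hv' μE μE' hμE hμE'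
  haveI : Nonempty (Fin k) := Fin.pos_iff_nonempty.mp hk
  set π := E.linearProjOfIsCompl F h with hπdef
  set π' := E'.linearProjOfIsCompl F h' with hπ'def
  set d := BY.dH E E' with hddef
  have hd0 : 0 ≤ d := Metric.hausdorffDist_nonneg
  set ε := (1 + 2*sk) * d with hεdef
  have hε0 : 0 ≤ ε := by positivity
  have hε3 : ε ≤ 1/3 := by
    have h2 : d ≤ (3 * (1 + 2 * sk))⁻¹ := hdle
    have h3 : (0:ℝ) < 1 + 2*sk := by linarith
    calc ε = (1+2*sk) * d := rfl
    _ ≤ (1+2*sk) * (3 * (1 + 2 * sk))⁻¹ := by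
        exact mul_le_mul_of_nonneg_left h2 (le_of_lt h3)
    _ = 1/3 := by field_simp
  have h1mε : (0:ℝ) < 1 - ε := by linarith
  have h1pε : (0:ℝ) < 1 + ε := by linarith
  -- bound on π
  have hπb : ∀ x : B, ‖(π x : B)‖ ≤ sk * ‖x‖ := S9.proj_bound hFcl h h_proj
  -- h5 : deviation of π on E'
  have h5 : ∀ x ∈ E', ‖x - (π x : B)‖ ≤ ((1+sk)*d) * ‖x‖ := by
    set T : B →ₗ[ℝ] B := LinearMap.id - E.subtype.comp π with hT
    have hTx : ∀ x : B, T x = x - (π x : B) := fun x => rfl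
    have hhom := S9.homog (E₀ := E') (T := T) (C := (1+sk)*d) (by positivity) ?_
    · intro x hx
      have := hhom x hx
      rwa [hTx] at this
    · intro x hx hx1
      obtain ⟨y, hy, hxy⟩ := S9.near_point (E := E') (E' := E) hk hfrE' hfrE ⟨hx, hx1⟩
      have hyE : y ∈ E := hy.1
      have hπy : (π y : B) = y := by
        have : π y = ⟨y, hyE⟩ := by
          rw [hπdef]
          exact Submodule.linearProjOfIsCompl_apply_left h ⟨y, hyE⟩
        rw [this]
      have hTy : T y = 0 := by rw [hTx, hπy, sub_self]
      have hTxy : T x = T (x - y) := by rw [map_sub, hTy, sub_zero]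
      have hdHle : ‖x - y‖ ≤ d := by
        rw [hddef, BY.dH, Metric.hausdorffDist_comm]
        exact hxy
      calc ‖T x‖ = ‖(x - y) - (π (x-y) : B)‖ := by rw [hTxy, hTx]
      _ ≤ ‖x - y‖ + ‖(π (x-y) : B)‖ := norm_sub_le _ _
      _ ≤ ‖x - y‖ + sk * ‖x - y‖ := by linarith [hπb (x-y)]
      _ = (1 + sk) * ‖x - y‖ := by ring
      _ ≤ (1 + sk) * d := by
          exact mul_le_mul_of_nonneg_left hdHle (by linarith)
  -- h6 : bound on π'
  have h6 : ∀ x : B, ‖(π' x : B)‖ ≤ (2*sk) * ‖x‖ := by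
    intro x
    set e' : B := (π' x : B) with he'
    have hmem : e' ∈ E' := SetLike.coe_mem _
    have hxf : x - e' ∈ F := by
      have hsum : (E'.linearProjOfIsCompl F h' x : B) + (F.linearProjOfIsCompl E' h'.symm x : B) = x :=
        Submodule.projection_add_projection_eq_self h' x
      have : x - e' = (F.linearProjOfIsCompl E' h'.symm x : B) := by
        rw [he', hπ'def]
        linear_combination (norm := module) - hsum
      rw [this]
      exact SetLike.coe_mem _
    have hπe : (π e' : B) = (π x : B) := by
      have hz : π (x - e') = 0 :=
        Submodule.projectionOnto_apply_of_mem_right h hxf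
      have : π x - π e' = 0 := by rw [← map_sub, hz]
      have h2 : π x = π e' := by
        have := sub_eq_zero.mp this
        exact this
      rw [h2]
    have hb1 : ‖e' - (π e' : B)‖ ≤ ((1+sk)*d) * ‖e'‖ := h5 e' hmem
    have hb2 : ‖(π e' : B)‖ ≤ sk * ‖x‖ := by rw [hπe]; exact hπb x
    have hhalf : (1+sk)*d ≤ 1/2 := by
      have : (1+sk)*d ≤ (1+2*sk)*d := by nlinarith
      linarith
    have htri : ‖e'‖ ≤ ‖(π e' : B)‖ + ‖e' - (π e' : B)‖ := by
      have := norm_add_le ((π e' : B)) (e' - (π e' : B))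
      simpa using this
    have hfin : ‖e'‖ ≤ sk * ‖x‖ + (1/2) * ‖e'‖ := by
      have : ((1+sk)*d) * ‖e'‖ ≤ (1/2) * ‖e'‖ :=
        mul_le_mul_of_nonneg_right hhalf (norm_nonneg _)
      linarith
    linarith
  -- h7 : deviation of π' on E
  have h7 : ∀ x ∈ E, ‖x - (π' x : B)‖ ≤ ε * ‖x‖ := by
    set T : B →ₗ[ℝ] B := LinearMap.id - E'.subtype.comp π' with hT
    have hTx : ∀ x : B, T x = x - (π' x : B) := fun x => rfl
    have hhom := S9.homog (E₀ := E) (T := T) (C := ε) hε0 ?_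
    · intro x hx
      have := hhom x hx
      rwa [hTx] at this
    · intro x hx hx1
      obtain ⟨y, hy, hxy⟩ := S9.near_point (E := E) (E' := E') hk hfrE hfrE' ⟨hx, hx1⟩
      have hyE : y ∈ E' := hy.1
      have hπy : (π' y : B) = y := by
        have : π' y = ⟨y, hyE⟩ := by
          rw [hπ'def]
          exact Submodule.linearProjOfIsCompl_apply_left h' ⟨y, hyE⟩
        rw [this]
      have hTy : T y = 0 := by rw [hTx, hπy, sub_self]
      have hTxy : T x = T (x - y) := by rw [map_sub, hTy, sub_zero]
      calc ‖T x‖ = ‖(x - y) - (π' (x-y) : B)‖ := by rw [hTxy, hTx]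
      _ ≤ ‖x - y‖ + ‖(π' (x-y) : B)‖ := norm_sub_le _ _
      _ ≤ ‖x - y‖ + (2*sk) * ‖x - y‖ := by linarith [h6 (x-y)]
      _ = (1 + 2*sk) * ‖x - y‖ := by ring
      _ ≤ (1 + 2*sk) * d := mul_le_mul_of_nonneg_left hxy (by linarith)
      _ = ε := rfl
  have h8lo : ∀ x ∈ E, (1-ε) * ‖x‖ ≤ ‖(π' x : B)‖ := by
    intro x hx
    have h1 := h7 x hx
    have h2 : ‖x‖ - ‖(π' x : B)‖ ≤ ‖x - (π' x : B)‖ := by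
      have := norm_sub_norm_le x ((π' x : B))
      linarith [abs_le.mp (abs_norm_sub_norm_le x ((π' x : B)))]
    nlinarith [norm_nonneg x]
  have h8hi : ∀ x ∈ E, ‖(π' x : B)‖ ≤ (1+ε) * ‖x‖ := by
    intro x hx
    have h1 := h7 x hx
    have h2 : ‖(π' x : B)‖ - ‖x‖ ≤ ‖x - (π' x : B)‖ := by
      linarith [abs_le.mp (abs_norm_sub_norm_le x ((π' x : B)))]
    nlinarith
  -- the normalizing factors
  set n : Fin k → ℝ := fun i => ‖(π' (v i) : B)‖ with hndef
  have hnlo : ∀ i, 1 - ε ≤ n i := by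
    intro i
    have := h8lo (v i) (hvE i)
    rwa [hvU i, mul_one] at this
  have hnhi : ∀ i, n i ≤ 1 + ε := by
    intro i
    have := h8hi (v i) (hvE i)
    rwa [hvU i, mul_one] at this
  have hnpos : ∀ i, 0 < n i := fun i => lt_of_lt_of_le h1mε (hnlo i)
  have hv'eq : ∀ i, v' i = (n i)⁻¹ • ((π' (v i) : B)) := fun i => hv' i
  have hv'norm : ∀ i, ‖v' i‖ = 1 := by
    intro i
    rw [hv'eq i, norm_smul, Real.norm_eq_abs, abs_of_pos (inv_pos.mpr (hnpos i))]
    exact inv_mul_cancel₀ (ne_of_gt (hnpos i))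
  have hv'mem : ∀ i, v' i ∈ E' := by
    intro i
    rw [hv'eq i]
    exact E'.smul_mem _ (SetLike.coe_mem _)
  -- key identity
  have hkey : ∀ a : Fin k → ℝ,
      ∑ i, a i • v' i = (π' (∑ i, (a i * (n i)⁻¹) • v i) : B) := by
    intro a
    rw [map_sum, AddSubmonoidClass.coe_finset_sum]
    refine Finset.sum_congr rfl fun i _ => ?_
    rw [hv'eq i, LinearMap.map_smul, Submodule.coe_smul, smul_smul]
  -- coordinate control
  set bE : Fin k → E := fun i => ⟨v i, hvE i⟩ with hbEdef
  have hbEind : LinearIndependent ℝ bE := by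
    apply LinearIndependent.of_comp E.subtype
    exact hvind
  set bb : Basis (Fin k) ℝ E :=
    basisOfLinearIndependentOfCardEqFinrank hbEind (by simp [hfrE]) with hbb
  have hbbcoe : ⇑bb = bE := coe_basisOfLinearIndependentOfCardEqFinrank hbEind _
  set Lc : (Fin k → ℝ) ≃L[ℝ] E := bb.equivFun.symm.toContinuousLinearEquiv with hLcdef
  have hLcE : ∀ a : Fin k → ℝ, Lc a = ∑ i, a i • bE i := by
    intro a
    show bb.equivFun.symm a = _
    rw [Basis.equivFun_symm_apply, hbbcoe]
  have hLcB : ∀ a : Fin k → ℝ, ((Lc a : E) : B) = ∑ i, a i • v i := by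
    intro a
    rw [hLcE, AddSubmonoidClass.coe_finset_sum]
    refine Finset.sum_congr rfl fun i _ => ?_
    rw [Submodule.coe_smul]
  set C₀ : ℝ := ‖(Lc.symm : E →L[ℝ] (Fin k → ℝ))‖ with hC₀def
  have hC₀0 : 0 ≤ C₀ := ContinuousLinearMap.opNorm_nonneg _
  have hC₀ : ∀ a : Fin k → ℝ, ‖a‖ ≤ C₀ * ‖∑ i, a i • v i‖ := by
    intro a
    have h1 : ‖a‖ = ‖Lc.symm (Lc a)‖ := by simp
    have h2 : ‖Lc.symm (Lc a)‖ ≤ C₀ * ‖Lc a‖ :=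
      (Lc.symm : E →L[ℝ] (Fin k → ℝ)).le_opNorm (Lc a)
    have h3 : ‖Lc a‖ = ‖∑ i, a i • v i‖ := by
      rw [← Submodule.norm_coe (Lc a), hLcB]
    rw [h1, ← h3]
    exact h2
  -- Part 1
  set S : Fin k → Set ℝ :=
    fun i => {r : ℝ | ∃ a : Fin k → ℝ, ‖∑ j, a j • v j‖ ≤ 1 ∧ r = ‖a i • v i‖} with hSdef
  set S' : Fin k → Set ℝ :=
    fun i => {r : ℝ | ∃ a : Fin k → ℝ, ‖∑ j, a j • v' j‖ ≤ 1 ∧ r = ‖a i • v' i‖} with hS'def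
  have hNv : BY.Nquan v = ∑ i, sSup (S i) := rfl
  have hNv' : BY.Nquan v' = ∑ i, sSup (S' i) := rfl
  have hbddS : ∀ i, BddAbove (S i) := by
    intro i
    refine ⟨C₀, ?_⟩
    rintro r ⟨a, ha1, rfl⟩
    have h1 : ‖a i • v i‖ = |a i| := by
      rw [norm_smul, Real.norm_eq_abs, hvU i, mul_one]
    have h2 : |a i| ≤ ‖a‖ := by
      have := norm_le_pi_norm a i
      rwa [Real.norm_eq_abs] at this
    have h3 : ‖a‖ ≤ C₀ * 1 := le_trans (hC₀ a) (mul_le_mul_of_nonneg_left ha1 hC₀0)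
    rw [h1]; linarith
  have h0S : ∀ i, (0:ℝ) ∈ S i := by
    intro i
    exact ⟨0, by simp, by simp⟩
  have htnn : ∀ i, 0 ≤ sSup (S i) := fun i => le_csSup (hbddS i) (h0S i)
  have hS'le : ∀ i, ∀ r ∈ S' i, r ≤ 2 * sSup (S i) := by
    intro i r hr
    obtain ⟨a, ha1, rfl⟩ := hr
    set c : Fin k → ℝ := fun j => a j * (n j)⁻¹ with hcdef
    set x : B := ∑ j, c j • v j with hxdef
    have hxE : x ∈ E := Submodule.sum_mem _ fun j _ => E.smul_mem _ (hvE j)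
    have hπx : ∑ j, a j • v' j = (π' x : B) := hkey a
    have hxn : (1-ε) * ‖x‖ ≤ 1 := le_trans (h8lo x hxE) (by rw [← hπx]; exact ha1)
    set a'' : Fin k → ℝ := fun j => (1-ε) * c j with ha''def
    have hsum'' : ∑ j, a'' j • v j = (1-ε) • x := by
      rw [hxdef, Finset.smul_sum]
      exact Finset.sum_congr rfl fun j _ => by rw [ha''def, smul_smul]
    have hin : ‖a'' i • v i‖ ∈ S i := by
      refine ⟨a'', ?_, rfl⟩
      rw [hsum'', norm_smul, Real.norm_eq_abs, abs_of_pos h1mε]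
      exact hxn
    have hle1 : ‖a'' i • v i‖ ≤ sSup (S i) := le_csSup (hbddS i) hin
    have h1 : ‖a'' i • v i‖ = (1-ε) * |c i| := by
      rw [norm_smul, Real.norm_eq_abs, hvU i, mul_one, ha''def, abs_mul, abs_of_pos h1mε]
    have h2 : ‖a i • v' i‖ = |c i| * n i := by
      rw [norm_smul, Real.norm_eq_abs, hv'norm i, mul_one]
      have : a i = c i * n i := by
        show a i = a i * (n i)⁻¹ * n i
        rw [inv_mul_cancel_right₀ (ne_of_gt (hnpos i))]
      rw [this, abs_mul, abs_of_pos (hnpos i)]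
    rw [h2]
    have h3 : (1-ε) * |c i| ≤ sSup (S i) := by rw [← h1]; exact hle1
    have h4 : n i ≤ 1 + ε := hnhi i
    have h5' : 0 ≤ |c i| := abs_nonneg _
    nlinarith [hnpos i]
  have conc1 : BY.Nquan v' ≤ 2 * k * BY.Nquan v := by
    rw [hNv, hNv']
    have hstep : ∀ i, sSup (S' i) ≤ 2 * sSup (S i) := by
      intro i
      exact Real.sSup_le (hS'le i) (by linarith [htnn i])
    calc ∑ i, sSup (S' i) ≤ ∑ i, 2 * sSup (S i) := Finset.sum_le_sum fun i _ => hstep i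
    _ = 2 * ∑ i, sSup (S i) := by rw [Finset.mul_sum]
    _ ≤ 2 * k * ∑ i, sSup (S i) := by
        have hsum0 : 0 ≤ ∑ i, sSup (S i) := Finset.sum_nonneg fun i _ => htnn i
        nlinarith
  refine ⟨conc1, ?_⟩
  -- Part 2
  have hωpos : (0:ENNReal) < BY.euclideanBallVol k := by
    have hb : (0:ENNReal) < volume (Metric.ball (0 : EuclideanSpace ℝ (Fin k)) 1) :=
      measure_ball_pos _ _ one_pos
    exact lt_of_lt_of_le hb (measure_mono Metric.ball_subset_closedBall)
  have hωtop : BY.euclideanBallVol k ≠ ⊤ := measure_closedBall_lt_top.ne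
  set ω := BY.euclideanBallVol k with hωdef
  have hcoeSumE : ∀ a : Fin k → ℝ, ((∑ i, a i • bE i : E) : B) = ∑ i, a i • v i := by
    intro a
    rw [AddSubmonoidClass.coe_finset_sum]
    exact Finset.sum_congr rfl fun i _ => by rw [Submodule.coe_smul]
  have hsetE : Subtype.val ⁻¹' BY.pped v
      = {u : E | ∃ a : Fin k → ℝ, (∀ i, a i ∈ Set.Icc (0:ℝ) 1) ∧ u = ∑ i, a i • bE i} := by
    ext u
    simp only [Set.mem_preimage, BY.pped, Set.mem_setOf_eq]
    constructor
    · rintro ⟨a, ha, hu⟩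
      exact ⟨a, ha, Subtype.ext (by rw [hu, hcoeSumE])⟩
    · rintro ⟨a, ha, hu⟩
      exact ⟨a, ha, by rw [hu, hcoeSumE]⟩
  set KB : Set (Fin k → ℝ) := {a | ‖∑ i, a i • v i‖ ≤ 1} with hKBdef
  have hKBeq : {a : Fin k → ℝ | ‖(∑ i, a i • bE i : E)‖ ≤ 1} = KB := by
    ext a
    simp only [hKBdef, Set.mem_setOf_eq]
    rw [← Submodule.norm_coe (∑ i, a i • bE i), hcoeSumE]
  have hvolE := S9.vol_key hk E μE hμE.1 hμE.2 bE hbEind hfrE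
  rw [← hsetE, hKBeq] at hvolE
  -- E' side
  have hv'ind : LinearIndependent ℝ v' := by
    rw [Fintype.linearIndependent_iff]
    intro g hg
    set x : B := ∑ i, (g i * (n i)⁻¹) • v i with hxdef
    have hxE : x ∈ E := Submodule.sum_mem _ fun j _ => E.smul_mem _ (hvE j)
    have h1 : (π' x : B) = 0 := by rw [← hkey]; exact hg
    have h2 : (1-ε) * ‖x‖ ≤ 0 := by
      have := h8lo x hxE
      rw [h1, norm_zero] at this
      exact this
    have h4 : ‖x‖ ≤ 0 := by
      have h2' : (1-ε) * ‖x‖ ≤ (1-ε) * 0 := by simpa using h2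
      exact (mul_le_mul_iff_right₀ h1mε).mp h2'
    have h3 : x = 0 := by
      rw [← norm_eq_zero]
      exact le_antisymm h4 (norm_nonneg x)
    intro i
    have h5 : g i * (n i)⁻¹ = 0 := by
      refine Fintype.linearIndependent_iff.mp hvind (fun j => g j * (n j)⁻¹) ?_ i
      exact h3
    rcases mul_eq_zero.mp h5 with h6 | h6
    · exact h6
    · exact absurd h6 (inv_ne_zero (ne_of_gt (hnpos i)))
  set bE' : Fin k → E' := fun i => ⟨v' i, hv'mem i⟩ with hbE'def
  have hbE'ind : LinearIndependent ℝ bE' := by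
    apply LinearIndependent.of_comp E'.subtype
    exact hv'ind
  have hcoeSumE' : ∀ a : Fin k → ℝ, ((∑ i, a i • bE' i : E') : B) = ∑ i, a i • v' i := by
    intro a
    rw [AddSubmonoidClass.coe_finset_sum]
    exact Finset.sum_congr rfl fun i _ => by rw [Submodule.coe_smul]
  have hsetE' : Subtype.val ⁻¹' BY.pped v'
      = {u : E' | ∃ a : Fin k → ℝ, (∀ i, a i ∈ Set.Icc (0:ℝ) 1) ∧ u = ∑ i, a i • bE' i} := by
    ext u
    simp only [Set.mem_preimage, BY.pped, Set.mem_setOf_eq]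
    constructor
    · rintro ⟨a, ha, hu⟩
      exact ⟨a, ha, Subtype.ext (by rw [hu, hcoeSumE'])⟩
    · rintro ⟨a, ha, hu⟩
      exact ⟨a, ha, by rw [hu, hcoeSumE']⟩
  set KB' : Set (Fin k → ℝ) := {a | ‖∑ i, a i • v' i‖ ≤ 1} with hKB'def
  have hKB'eq : {a : Fin k → ℝ | ‖(∑ i, a i • bE' i : E')‖ ≤ 1} = KB' := by
    ext a
    simp only [hKB'def, Set.mem_setOf_eq]
    rw [← Submodule.norm_coe (∑ i, a i • bE' i), hcoeSumE']
  have hvolE' := S9.vol_key hk E' μE' hμE'.1 hμE'.2 bE' hbE'ind hfrE'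
  rw [← hsetE', hKB'eq] at hvolE'
  -- sandwich for KB'
  set gmap : (Fin k → ℝ) → (Fin k → ℝ) := fun x i => n i * x i with hgmapdef
  set M : Set (Fin k → ℝ) := {x | ‖(π' (∑ i, x i • v i) : B)‖ ≤ 1} with hMdef
  have hKB'img : KB' = gmap '' M := by
    ext a
    simp only [hKB'def, hMdef, Set.mem_setOf_eq, Set.mem_image]
    constructor
    · intro ha
      refine ⟨fun i => a i * (n i)⁻¹, ?_, ?_⟩
      · show ‖(π' (∑ i, (a i * (n i)⁻¹) • v i) : B)‖ ≤ 1
        rw [← hkey]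
        exact ha
      · funext i
        show n i * (a i * (n i)⁻¹) = a i
        rw [mul_comm (a i), ← mul_assoc, mul_inv_cancel₀ (ne_of_gt (hnpos i)), one_mul]
    · rintro ⟨x, hx, rfl⟩
      have hxx : ∑ i, ((gmap x) i * (n i)⁻¹) • v i = ∑ i, x i • v i := by
        refine Finset.sum_congr rfl fun i _ => ?_
        congr 1
        show n i * x i * (n i)⁻¹ = x i
        rw [mul_comm (n i) (x i), mul_inv_cancel_right₀ (ne_of_gt (hnpos i))]
      rw [hkey (gmap x), hxx]
      exact hx
  have hMup : M ⊆ {x : Fin k → ℝ | ‖∑ i, x i • v i‖ ≤ (1-ε)⁻¹} := by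
    intro x hx
    have hxE : (∑ i, x i • v i) ∈ E := Submodule.sum_mem _ fun j _ => E.smul_mem _ (hvE j)
    have h1 := h8lo _ hxE
    have h2 : (1-ε) * ‖∑ i, x i • v i‖ ≤ 1 := le_trans h1 hx
    rw [Set.mem_setOf_eq, ← one_div, le_div_iff₀ h1mε, mul_comm]
    exact h2
  have hMdown : {x : Fin k → ℝ | ‖∑ i, x i • v i‖ ≤ (1+ε)⁻¹} ⊆ M := by
    intro x hx
    have hxE : (∑ i, x i • v i) ∈ E := Submodule.sum_mem _ fun j _ => E.smul_mem _ (hvE j)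
    have h1 := h8hi _ hxE
    show ‖(π' (∑ i, x i • v i) : B)‖ ≤ 1
    have h2 : (1+ε) * ‖∑ i, x i • v i‖ ≤ (1+ε) * (1+ε)⁻¹ :=
      mul_le_mul_of_nonneg_left hx (le_of_lt h1pε)
    rw [mul_inv_cancel₀ (ne_of_gt h1pε)] at h2
    linarith
  have hsmulset : ∀ r : ℝ, 0 < r → {x : Fin k → ℝ | ‖∑ i, x i • v i‖ ≤ r} = r • KB := by
    intro r hr
    ext x
    have hsum : ∑ i, (r⁻¹ • x) i • v i = r⁻¹ • ∑ i, x i • v i := by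
      rw [Finset.smul_sum]
      exact Finset.sum_congr rfl fun i _ => by rw [Pi.smul_apply, smul_smul, smul_eq_mul]
    constructor
    · intro hx
      rw [Set.mem_smul_set_iff_inv_smul_mem₀ (ne_of_gt hr)]
      show ‖∑ i, (r⁻¹ • x) i • v i‖ ≤ 1
      rw [hsum, norm_smul, Real.norm_eq_abs, abs_of_pos (inv_pos.mpr hr)]
      have h2 : r⁻¹ * ‖∑ i, x i • v i‖ ≤ r⁻¹ * r :=
        mul_le_mul_of_nonneg_left hx (inv_nonneg.mpr hr.le)
      rwa [inv_mul_cancel₀ (ne_of_gt hr)] at h2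
    · intro hx
      rw [Set.mem_smul_set_iff_inv_smul_mem₀ (ne_of_gt hr)] at hx
      have hx' : ‖∑ i, (r⁻¹ • x) i • v i‖ ≤ 1 := hx
      rw [hsum, norm_smul, Real.norm_eq_abs, abs_of_pos (inv_pos.mpr hr)] at hx'
      show ‖∑ i, x i • v i‖ ≤ r
      have h2 : r * (r⁻¹ * ‖∑ i, x i • v i‖) ≤ r * 1 := mul_le_mul_of_nonneg_left hx' hr.le
      rwa [← mul_assoc, mul_inv_cancel₀ (ne_of_gt hr), one_mul, mul_one] at h2
  have himg1 : gmap '' ((1+ε)⁻¹ • KB) ⊆ KB' := by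
    rw [hKB'img]
    refine Set.image_mono ?_
    rw [← hsmulset _ (inv_pos.mpr h1pε)]
    exact hMdown
  have himg2 : KB' ⊆ gmap '' ((1-ε)⁻¹ • KB) := by
    rw [hKB'img]
    refine Set.image_mono ?_
    rw [← hsmulset _ (inv_pos.mpr h1mε)]
    exact hMup
  have hfr_pi : Module.finrank ℝ (Fin k → ℝ) = k := by
    simp [Module.finrank_pi]
  have hprodn_pos : 0 < ∏ i, n i := Finset.prod_pos fun i _ => hnpos i
  have hvolimg : ∀ r : ℝ, 0 < r →
      volume (gmap '' (r • KB))
        = ENNReal.ofReal (∏ i, n i) * (ENNReal.ofReal (r^k) * volume KB) := by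
    intro r hr
    have h1 : volume (gmap '' (r • KB)) = ENNReal.ofReal |∏ i, n i| * volume (r • KB) :=
      S9.diag_image_volume n (r • KB)
    rw [h1, Measure.addHaar_smul, hfr_pi, abs_of_pos hprodn_pos, abs_of_pos (pow_pos hr k)]
  have hKBfin : volume KB ≠ ⊤ := by
    have hsub : KB ⊆ Metric.closedBall 0 C₀ := by
      intro a ha
      rw [Metric.mem_closedBall, dist_zero_right]
      calc ‖a‖ ≤ C₀ * ‖∑ i, a i • v i‖ := hC₀ a
      _ ≤ C₀ * 1 := mul_le_mul_of_nonneg_left ha hC₀0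
      _ = C₀ := mul_one _
    exact (lt_of_le_of_lt (measure_mono hsub) measure_closedBall_lt_top).ne
  have hKBpos : 0 < volume KB := by
    set CΦ := ‖(Lc : (Fin k → ℝ) →L[ℝ] E)‖ with hCΦdef
    have hCΦ0 : 0 ≤ CΦ := ContinuousLinearMap.opNorm_nonneg _
    have hr0 : 0 < (CΦ + 1)⁻¹ := by positivity
    have hsub : Metric.ball 0 ((CΦ+1)⁻¹) ⊆ KB := by
      intro a ha
      rw [Metric.mem_ball, dist_zero_right] at ha
      show ‖∑ i, a i • v i‖ ≤ 1
      have h1 : ‖∑ i, a i • v i‖ = ‖Lc a‖ := by rw [← hLcB, Submodule.norm_coe]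
      have h2 : ‖Lc a‖ ≤ CΦ * ‖a‖ := (Lc : (Fin k → ℝ) →L[ℝ] E).le_opNorm a
      have h3 : CΦ * ‖a‖ ≤ CΦ * (CΦ+1)⁻¹ := mul_le_mul_of_nonneg_left ha.le hCΦ0
      have h4 : CΦ * (CΦ+1)⁻¹ ≤ 1 := by
        rw [← one_div, mul_one_div, div_le_one (by positivity)]
        linarith
      rw [h1]; linarith
    exact lt_of_lt_of_le (measure_ball_pos _ _ hr0) (measure_mono hsub)
  have hlo : ENNReal.ofReal (∏ i, n i) * (ENNReal.ofReal (((1+ε)⁻¹)^k) * volume KB)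
      ≤ volume KB' := by
    rw [← hvolimg _ (inv_pos.mpr h1pε)]
    exact measure_mono himg1
  have hhi : volume KB' ≤ ENNReal.ofReal (∏ i, n i) * (ENNReal.ofReal (((1-ε)⁻¹)^k) * volume KB) := by
    rw [← hvolimg _ (inv_pos.mpr h1mε)]
    exact measure_mono himg2
  have hrhs_fin : ENNReal.ofReal (∏ i, n i) * (ENNReal.ofReal (((1-ε)⁻¹)^k) * volume KB) ≠ ⊤ :=
    ENNReal.mul_ne_top ENNReal.ofReal_ne_top (ENNReal.mul_ne_top ENNReal.ofReal_ne_top hKBfin)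
  have hlhs_fin : ENNReal.ofReal (∏ i, n i) * (ENNReal.ofReal (((1+ε)⁻¹)^k) * volume KB) ≠ ⊤ :=
    ENNReal.mul_ne_top ENNReal.ofReal_ne_top (ENNReal.mul_ne_top ENNReal.ofReal_ne_top hKBfin)
  have hKB'fin : volume KB' ≠ ⊤ := (lt_of_le_of_lt hhi (lt_top_iff_ne_top.mpr hrhs_fin)).ne
  have hKB'pos : 0 < volume KB' := by
    refine lt_of_lt_of_le ?_ hlo
    refine ENNReal.mul_pos ?_ ?_
    · exact (ENNReal.ofReal_pos.mpr hprodn_pos).ne'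
    · exact (ENNReal.mul_pos (ENNReal.ofReal_pos.mpr (by positivity)).ne' hKBpos.ne').ne'
  have hμEPv : μE (Subtype.val ⁻¹' BY.pped v) = ω / volume KB :=
    (ENNReal.eq_div_iff hKBpos.ne' hKBfin).mpr (by rw [mul_comm]; exact hvolE)
  have hμE'Pv' : μE' (Subtype.val ⁻¹' BY.pped v') = ω / volume KB' :=
    (ENNReal.eq_div_iff hKB'pos.ne' hKB'fin).mpr (by rw [mul_comm]; exact hvolE')
  set VK := (volume KB).toReal with hVKdef
  set VK' := (volume KB').toReal with hVK'def
  have hVKpos : 0 < VK := ENNReal.toReal_pos hKBpos.ne' hKBfin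
  have hVK'pos : 0 < VK' := ENNReal.toReal_pos hKB'pos.ne' hKB'fin
  have hωR : 0 < ω.toReal := ENNReal.toReal_pos hωpos.ne' hωtop
  have hratio : (μE (Subtype.val ⁻¹' BY.pped v)).toReal /
      (μE' (Subtype.val ⁻¹' BY.pped v')).toReal = VK' / VK := by
    rw [hμEPv, hμE'Pv', ENNReal.toReal_div, ENNReal.toReal_div, ← hVKdef, ← hVK'def]
    rw [div_div_div_comm]
    rw [div_self hωR.ne', one_div, inv_div]
  have hreal_hi : VK' ≤ (∏ i, n i) * (((1-ε)⁻¹)^k * VK) := by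
    have h1 := (ENNReal.toReal_le_toReal hKB'fin hrhs_fin).mpr hhi
    rwa [ENNReal.toReal_mul, ENNReal.toReal_mul, ENNReal.toReal_ofReal hprodn_pos.le,
      ENNReal.toReal_ofReal (by positivity)] at h1
  have hreal_lo : (∏ i, n i) * (((1+ε)⁻¹)^k * VK) ≤ VK' := by
    have h1 := (ENNReal.toReal_le_toReal hlhs_fin hKB'fin).mpr hlo
    rwa [ENNReal.toReal_mul, ENNReal.toReal_mul, ENNReal.toReal_ofReal hprodn_pos.le,
      ENNReal.toReal_ofReal (by positivity)] at h1
  set R := VK' / VK with hRdef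
  have hRpos : 0 < R := div_pos hVK'pos hVKpos
  have hconstp : ∏ _i : Fin k, (1+ε) = (1+ε)^k := by
    rw [Finset.prod_const, Finset.card_univ, Fintype.card_fin]
  have hconstm : ∏ _i : Fin k, (1-ε) = (1-ε)^k := by
    rw [Finset.prod_const, Finset.card_univ, Fintype.card_fin]
  have hprod_hi : ∏ i, n i ≤ (1+ε)^k := by
    rw [← hconstp]
    exact Finset.prod_le_prod (fun i _ => (hnpos i).le) (fun i _ => hnhi i)
  have hprod_lo : (1-ε)^k ≤ ∏ i, n i := by
    rw [← hconstm]
    exact Finset.prod_le_prod (fun i _ => h1mε.le) (fun i _ => hnlo i)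
  have hRhi : R ≤ ((1+ε) * (1-ε)⁻¹)^k := by
    rw [hRdef, div_le_iff₀ hVKpos]
    calc VK' ≤ (∏ i, n i) * (((1-ε)⁻¹)^k * VK) := hreal_hi
    _ ≤ (1+ε)^k * (((1-ε)⁻¹)^k * VK) :=
      mul_le_mul_of_nonneg_right hprod_hi (by positivity)
    _ = ((1+ε) * (1-ε)⁻¹)^k * VK := by rw [mul_pow]; ring
  have hRlo : ((1-ε) * (1+ε)⁻¹)^k ≤ R := by
    rw [hRdef, le_div_iff₀ hVKpos]
    calc ((1-ε) * (1+ε)⁻¹)^k * VK = (1-ε)^k * (((1+ε)⁻¹)^k * VK) := by rw [mul_pow]; ring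
    _ ≤ (∏ i, n i) * (((1+ε)⁻¹)^k * VK) :=
      mul_le_mul_of_nonneg_right hprod_lo (by positivity)
    _ ≤ VK' := hreal_lo
  set q := (1+ε) * (1-ε)⁻¹ with hqdef
  have hqpos : 0 < q := mul_pos h1pε (inv_pos.mpr h1mε)
  have hqexp : q ≤ Real.exp (3*ε) := S9.arith_q hε0 hε3
  have hqk : R ≤ Real.exp (3*k*ε) := by
    have hstep : Real.exp ((k:ℝ) * (3*ε)) = Real.exp (3*k*ε) := by
      congr 1
      ring
    calc R ≤ q^k := hRhi
    _ ≤ (Real.exp (3*ε))^k := pow_le_pow_left₀ hqpos.le hqexp k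
    _ = Real.exp (k * (3*ε)) := (Real.exp_nat_mul _ k).symm
    _ = Real.exp (3*k*ε) := hstep
  have hpk : Real.exp (-(3*k*ε)) ≤ R := by
    have hqinv : Real.exp (-(3*ε)) ≤ q⁻¹ := by
      rw [Real.exp_neg]
      exact inv_anti₀ hqpos hqexp
    have hqinveq : q⁻¹ = (1-ε) * (1+ε)⁻¹ := by
      rw [hqdef, mul_inv, inv_inv, mul_comm]
    have hstep : Real.exp (-(3*(k:ℝ)*ε)) = (Real.exp (-(3*ε)))^k := by
      rw [← Real.exp_nat_mul]
      congr 1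
      ring
    calc Real.exp (-(3*k*ε)) = (Real.exp (-(3*ε)))^k := hstep
    _ ≤ (q⁻¹)^k := pow_le_pow_left₀ (Real.exp_pos _).le hqinv k
    _ = ((1-ε) * (1+ε)⁻¹)^k := by rw [hqinveq]
    _ ≤ R := hRlo
  have hlog : |Real.log R| ≤ 3*k*ε := by
    rw [abs_le]
    constructor
    · exact (Real.le_log_iff_exp_le hRpos).mpr hpk
    · exact (Real.log_le_iff_le_exp hRpos).mpr hqk
  calc |Real.log ((μE (Subtype.val ⁻¹' BY.pped v)).toReal /
      (μE' (Subtype.val ⁻¹' BY.pped v')).toReal)| = |Real.log R| := by rw [hratio]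
  _ ≤ 3*k*ε := hlog
  _ = 3 * k * (1 + 2 * sk) * d := by rw [hεdef]; ring
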